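/- Let X be a family of subsets of E such that val_X is submodular, so that val_X is the rank function of a matroid M_X. If there exists at least one X-matroid on E, then M_X is itself an X-matroid and every X-matroid M on E satisfies M ⪯ M_X in the weak order (every independent set of M is independent in M_X); i.e., M_X is the unique maximal X-matroid. -/

import Mathlib

open Set

variable {α : Type*}

/-- `C` is a circuit of `M`: a minimal dependent subset of the ground set. -/
def Matroid.IsCircuit' (M : Matroid α) (C : Set α) : Prop :=
  C ⊆ M.E ∧ ¬ M.Indep C ∧ ∀ e ∈ C, M.Indep (C \ {e})

/-- `M` is an `X`-matroid on `E`: a matroid with ground set `E` in which every member of the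
family `X` is a circuit. -/
def IsXMatroid (E : Set α) (X : Set (Set α)) (M : Matroid α) : Prop :=
  M.E = E ∧ ∀ C ∈ X, M.IsCircuit' C

/-- The union of a list of sets. -/
def unionList (S : List (Set α)) : Set α := ⋃ Y ∈ S, Y

/-- A proper `X`-sequence: a list of members of `X` such that no term is contained in the
union of the preceding terms. -/
def ProperSeq (X : Set (Set α)) (S : List (Set α)) : Prop :=
  (∀ Y ∈ S, Y ∈ X) ∧
  ∀ i : Fin S.length, 0 < i.1 → ¬ (S.get i ⊆ unionList (S.take i.1))

/-- `val(F, S) = |F ∪ ⋃ S| - |S|`. -/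
noncomputable def valSeq (F : Set α) (S : List (Set α)) : ℤ :=
  ((F ∪ unionList S).ncard : ℤ) - S.length

/-- `val_X(F)`: the minimum of `val(F, S)` over all proper `X`-sequences `S`. -/
noncomputable def valX (X : Set (Set α)) (F : Set α) : ℤ :=
  sInf {v : ℤ | ∃ S : List (Set α), ProperSeq X S ∧ v = valSeq F S}

/-- The rank of a set `F` in a matroid `M`: the largest size of an independent subset of `F`. -/
noncomputable def mrk (M : Matroid α) (F : Set α) : ℕ :=
  sSup {n : ℕ | ∃ I ⊆ F, M.Indep I ∧ I.ncard = n}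

/-- The weak order on matroids: `M ⪯ N` iff every independent set of `M` is independent in `N`. -/
def WeakLE (M N : Matroid α) : Prop := ∀ I : Set α, M.Indep I → N.Indep I

-- auxiliary lemmas

lemma mrkSet_nonempty (M : Matroid α) (F : Set α) :
    {n : ℕ | ∃ I ⊆ F, M.Indep I ∧ I.ncard = n}.Nonempty :=
  ⟨0, ∅, empty_subset _, M.empty_indep, Set.ncard_empty _⟩

lemma mrkSet_bdd (M : Matroid α) {F : Set α} (hF : F.Finite) :
    BddAbove {n : ℕ | ∃ I ⊆ F, M.Indep I ∧ I.ncard = n} :=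
  ⟨F.ncard, fun n ⟨I, hIF, _, hn⟩ => hn ▸ Set.ncard_le_ncard hIF hF⟩

lemma le_mrk {M : Matroid α} {F I : Set α} (hF : F.Finite) (hIF : I ⊆ F) (hI : M.Indep I) :
    I.ncard ≤ mrk M F :=
  le_csSup (mrkSet_bdd M hF) ⟨I, hIF, hI, rfl⟩

lemma mrk_le {M : Matroid α} {F : Set α} {m : ℕ}
    (h : ∀ I ⊆ F, M.Indep I → I.ncard ≤ m) : mrk M F ≤ m :=
  csSup_le (mrkSet_nonempty M F) (fun n hn => by obtain ⟨I, hIF, hI, rfl⟩ := hn; exact h I hIF hI)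

lemma exists_mrk {M : Matroid α} {F : Set α} (hF : F.Finite) :
    ∃ I ⊆ F, M.Indep I ∧ I.ncard = mrk M F :=
  Nat.sSup_mem (mrkSet_nonempty M F) (mrkSet_bdd M hF)

lemma mrk_le_ncard {M : Matroid α} {F : Set α} (hF : F.Finite) : mrk M F ≤ F.ncard :=
  mrk_le (fun _ hIF _ => Set.ncard_le_ncard hIF hF)

lemma mrk_basis {M : Matroid α} {F J : Set α} (hF : F.Finite) (hJ : M.IsBasis J F) :
    mrk M F = J.ncard := by
  have hJF := hJ.subset
  have hJfin : J.Finite := hF.subset hJF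
  refine le_antisymm (mrk_le ?_) (le_mrk hF hJF hJ.indep)
  intro I hIF hI
  by_contra hlt
  push_neg at hlt
  have hIfin : I.Finite := hF.subset hIF
  have henc : J.encard < I.encard := by
    rw [← hJfin.cast_ncard_eq, ← hIfin.cast_ncard_eq]
    exact_mod_cast hlt
  obtain ⟨e, he, hins⟩ := hJ.indep.augment hI henc
  have heq := hJ.eq_of_subset_indep hins (subset_insert e J)
    (insert_subset (hIF he.1) hJF)
  exact he.2 (heq ▸ mem_insert e J)

lemma mrk_indep {M : Matroid α} {I : Set α} (hI : M.Indep I) (hIfin : I.Finite) :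
    mrk M I = I.ncard :=
  mrk_basis hIfin hI.isBasis_self

lemma indep_of_mrk {M : Matroid α} {F : Set α} (hF : F.Finite) (h : mrk M F = F.ncard) :
    M.Indep F := by
  obtain ⟨I, hIF, hI, hcard⟩ := exists_mrk (M := M) hF
  have : I = F := Set.eq_of_subset_of_ncard_le hIF (by omega) hF
  exact this ▸ hI

lemma mrk_mono {M : Matroid α} {A B : Set α} (hB : B.Finite) (hAB : A ⊆ B) :
    mrk M A ≤ mrk M B := by
  obtain ⟨I, hIA, hI, hc⟩ := exists_mrk (M := M) (hB.subset hAB)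
  exact hc ▸ le_mrk hB (hIA.trans hAB) hI

lemma mrk_submod {M : Matroid α} (hME : M.E.Finite) {A B : Set α}
    (hA : A ⊆ M.E) (hB : B ⊆ M.E) :
    mrk M (A ∪ B) + mrk M (A ∩ B) ≤ mrk M A + mrk M B := by
  have hAfin := hME.subset hA
  have hBfin := hME.subset hB
  have hUfin : (A ∪ B).Finite := hAfin.union hBfin
  have hIsub : A ∩ B ⊆ M.E := inter_subset_left.trans hA
  obtain ⟨I, hI⟩ := M.exists_isBasis (A ∩ B) hIsub
  obtain ⟨J, hJ, hIJ⟩ := hI.indep.subset_isBasis_of_subset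
    (hI.subset.trans (inter_subset_left.trans subset_union_left)) (union_subset hA hB)
  have hJfin : J.Finite := hUfin.subset hJ.subset
  rw [mrk_basis hUfin hJ, mrk_basis (hAfin.subset inter_subset_left) hI]
  have hJI : J ∩ (A ∩ B) = I := by
    symm
    exact hI.eq_of_subset_indep (hJ.indep.subset inter_subset_left)
      (subset_inter hIJ hI.subset) inter_subset_right
  have hsplit : (J ∩ A ∪ J ∩ B).ncard + (J ∩ A ∩ (J ∩ B)).ncard
      = (J ∩ A).ncard + (J ∩ B).ncard :=
    Set.ncard_union_add_ncard_inter _ _ (hJfin.inter_of_left _) (hJfin.inter_of_left _)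
  have h1 : J ∩ A ∪ J ∩ B = J := by
    rw [← inter_union_distrib_left, inter_eq_left]
    exact hJ.subset
  have h2 : J ∩ A ∩ (J ∩ B) = I := by
    rw [← hJI]; ext x; simp [and_assoc]; tauto
  rw [h1, h2] at hsplit
  have h3 : (J ∩ A).ncard ≤ mrk M A :=
    le_mrk hAfin inter_subset_right (hJ.indep.subset inter_subset_left)
  have h4 : (J ∩ B).ncard ≤ mrk M B :=
    le_mrk hBfin inter_subset_right (hJ.indep.subset inter_subset_left)
  omega

lemma circuit_nonempty {M : Matroid α} {C : Set α} (hC : M.IsCircuit' C) : C.Nonempty := by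
  rcases C.eq_empty_or_nonempty with rfl | h
  · exact absurd M.empty_indep hC.2.1
  · exact h

lemma mrk_circuit {M : Matroid α} {C : Set α} (hC : M.IsCircuit' C) (hCfin : C.Finite) :
    mrk M C + 1 = C.ncard := by
  obtain ⟨e, he⟩ := circuit_nonempty hC
  have hpos : 0 < C.ncard := (Set.ncard_pos hCfin).2 ⟨e, he⟩
  have hub : mrk M C ≤ C.ncard - 1 := by
    apply mrk_le
    intro I hIC hI
    have hne : I ≠ C := fun h => hC.2.1 (h ▸ hI)
    obtain ⟨f, hfC, hfI⟩ := exists_of_ssubset ⟨hIC, fun h => hne (hIC.antisymm h)⟩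
    have : I ⊆ C \ {f} := fun x hx => ⟨hIC hx, fun h => hfI (h ▸ hx)⟩
    calc I.ncard ≤ (C \ {f}).ncard := Set.ncard_le_ncard this hCfin.diff
      _ = C.ncard - 1 := Set.ncard_diff_singleton_of_mem hfC
  have hlb : C.ncard - 1 ≤ mrk M C := by
    have := le_mrk hCfin diff_subset (hC.2.2 e he)
    rwa [Set.ncard_diff_singleton_of_mem he] at this
  omega

lemma nullity_step {M : Matroid α} (hME : M.E.Finite) {A C : Set α}
    (hA : A ⊆ M.E) (hC : M.IsCircuit' C) (hCA : ¬ C ⊆ A) :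
    (A.ncard : ℤ) - mrk M A + 1 ≤ ((A ∪ C).ncard : ℤ) - mrk M (A ∪ C) := by
  obtain ⟨e, heC, heA⟩ := not_subset.1 hCA
  have hCE := hC.1
  have hCfin := hME.subset hCE
  have hAfin := hME.subset hA
  have hIndep : M.Indep (A ∩ C) :=
    (hC.2.2 e heC).subset (fun x hx => ⟨hx.2, fun h => heA (h ▸ hx.1)⟩)
  have h1 := mrk_submod hME hA hCE
  have h2 : mrk M (A ∩ C) = (A ∩ C).ncard := mrk_indep hIndep (hAfin.inter_of_left _)
  have h3 := mrk_circuit hC hCfin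
  have h4 := Set.ncard_union_add_ncard_inter A C hAfin hCfin
  have h5 : (A ∩ C).ncard < C.ncard := by
    apply Set.ncard_lt_ncard _ hCfin
    exact ⟨inter_subset_right, fun h => heA (h heC).1⟩
  omega

@[simp] lemma unionList_nil : unionList ([] : List (Set α)) = ∅ := by simp [unionList]

@[simp] lemma unionList_singleton (C : Set α) : unionList [C] = C := by simp [unionList]

lemma unionList_append (S T : List (Set α)) :
    unionList (S ++ T) = unionList S ∪ unionList T := by
  ext x
  simp only [unionList, mem_iUnion, mem_union, List.mem_append]
  constructor
  · rintro ⟨Y, (h | h), hx⟩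
    · exact Or.inl ⟨Y, h, hx⟩
    · exact Or.inr ⟨Y, h, hx⟩
  · rintro (⟨Y, h, hx⟩ | ⟨Y, h, hx⟩)
    · exact ⟨Y, Or.inl h, hx⟩
    · exact ⟨Y, Or.inr h, hx⟩

lemma unionList_subset {S : List (Set α)} {E : Set α} (h : ∀ Y ∈ S, Y ⊆ E) :
    unionList S ⊆ E := by
  simp only [unionList]
  exact iUnion₂_subset h

lemma properSeq_nil {X : Set (Set α)} : ProperSeq X ([] : List (Set α)) :=
  ⟨by simp, fun i => i.elim0⟩

lemma take_append_le {S T : List (Set α)} {n : ℕ} (h : n ≤ S.length) :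
    (S ++ T).take n = S.take n := by
  rw [← List.take_left (l₁ := S) (l₂ := T), List.take_take, min_eq_left h, List.take_left]

lemma properSeq_append {X : Set (Set α)} {S : List (Set α)} {C : Set α}
    (h : ProperSeq X (S ++ [C])) :
    ProperSeq X S ∧ C ∈ X ∧ (S ≠ [] → ¬ C ⊆ unionList S) := by
  refine ⟨⟨fun Y hY => h.1 Y (by simp [hY]), ?_⟩, h.1 C (by simp), ?_⟩
  · intro i hi hsub
    have hilt : i.1 < S.length := i.isLt
    have hlen : i.1 < (S ++ [C]).length := by simp
    refine h.2 ⟨i.1, hlen⟩ hi ?_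
    have hget : (S ++ [C]).get ⟨i.1, hlen⟩ = S.get i := by
      simp only [List.get_eq_getElem]
      exact List.getElem_append_left hilt
    have htake : (S ++ [C]).take i.1 = S.take i.1 := take_append_le (le_of_lt hilt)
    rw [hget, htake]
    exact hsub
  · intro hS hsub
    have hn : 0 < S.length := List.length_pos_iff.2 hS
    have hlen : S.length < (S ++ [C]).length := by simp
    apply h.2 ⟨S.length, hlen⟩ hn
    have hget : (S ++ [C]).get ⟨S.length, hlen⟩ = C := by
      simp only [List.get_eq_getElem]
      exact List.getElem_concat_length (l := S) (a := C) rfl _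
    have htake : (S ++ [C]).take S.length = S := List.take_left (l₁ := S) (l₂ := [C])
    rw [hget, htake]
    exact hsub

lemma length_le_nullity {N : Matroid α} {E : Set α} (hE : E.Finite) {X : Set (Set α)}
    (hN : IsXMatroid E X N) :
    ∀ S : List (Set α), ProperSeq X S →
      (S.length : ℤ) ≤ ((unionList S).ncard : ℤ) - mrk N (unionList S) := by
  intro S
  induction S using List.reverseRecOn with
  | nil =>
    intro _
    have h := mrk_le_ncard (M := N) (F := (∅ : Set α)) finite_empty
    simp only [unionList_nil, Set.ncard_empty, List.length_nil] at h ⊢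
    omega
  | append_singleton S C ih =>
    intro hP
    obtain ⟨hPS, hCX, hCS⟩ := properSeq_append hP
    have hC := hN.2 C hCX
    have hNE : N.E = E := hN.1
    have hSE : unionList S ⊆ N.E :=
      unionList_subset (fun Y hY => (hN.2 Y (hPS.1 Y hY)).1)
    have hCA : ¬ C ⊆ unionList S := by
      rcases eq_or_ne S [] with rfl | hS
      · obtain ⟨e, he⟩ := circuit_nonempty hC
        simp only [unionList_nil]
        intro hsub
        exact (hsub he).elim
      · exact hCS hS
    have hstep := nullity_step (hNE ▸ hE) hSE hC hCA
    have hih := ih hPS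
    rw [unionList_append, unionList_singleton]
    simp only [List.length_append, List.length_singleton]
    push_cast
    omega

lemma mrk_le_valSeq {N : Matroid α} {E : Set α} (hE : E.Finite) {X : Set (Set α)}
    (hN : IsXMatroid E X N) {F : Set α} (hF : F ⊆ E) {S : List (Set α)}
    (hS : ProperSeq X S) :
    (mrk N F : ℤ) ≤ valSeq F S := by
  have hU : unionList S ⊆ E :=
    unionList_subset (fun Y hY => ((hN.2 Y (hS.1 Y hY)).1).trans hN.1.subset)
  have hFfin := hE.subset hF
  have hUfin := hE.subset hU
  have hFUfin : (F ∪ unionList S).Finite := hFfin.union hUfin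
  have h1 := length_le_nullity hE hN S hS
  have h2 : ((unionList S).ncard : ℤ) - mrk N (unionList S)
      ≤ ((F ∪ unionList S).ncard : ℤ) - mrk N (F ∪ unionList S) := by
    obtain ⟨I, hIB, hI, hcard⟩ := exists_mrk (M := N) hFUfin
    have hifin : I.Finite := hFUfin.subset hIB
    have h3 : (I ∩ unionList S).ncard ≤ mrk N (unionList S) :=
      le_mrk hUfin inter_subset_right (hI.subset inter_subset_left)
    have h4 : (I ∩ unionList S).ncard + (I \ unionList S).ncard = I.ncard :=
      Set.ncard_inter_add_ncard_diff_eq_ncard I (unionList S) hifin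
    have h5 : (I \ unionList S).ncard ≤ ((F ∪ unionList S) \ unionList S).ncard :=
      Set.ncard_le_ncard (diff_subset_diff_left hIB) hFUfin.diff
    have h6 : ((F ∪ unionList S) ∩ unionList S).ncard
        + ((F ∪ unionList S) \ unionList S).ncard = (F ∪ unionList S).ncard :=
      Set.ncard_inter_add_ncard_diff_eq_ncard _ (unionList S) hFUfin
    have h7 : (F ∪ unionList S) ∩ unionList S = unionList S :=
      inter_eq_right.2 subset_union_right
    rw [h7] at h6
    omega
  have h8 : mrk N F ≤ mrk N (F ∪ unionList S) := mrk_mono hFUfin subset_union_left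
  have h9 : (mrk N (F ∪ unionList S) : ℤ)
      ≤ ((F ∪ unionList S).ncard : ℤ) - S.length := by omega
  unfold valSeq
  omega

lemma valX_set_nonempty (X : Set (Set α)) (F : Set α) :
    {v : ℤ | ∃ S : List (Set α), ProperSeq X S ∧ v = valSeq F S}.Nonempty :=
  ⟨valSeq F [], [], properSeq_nil, rfl⟩

lemma mrk_le_valX {N : Matroid α} {E : Set α} (hE : E.Finite) {X : Set (Set α)}
    (hN : IsXMatroid E X N) {F : Set α} (hF : F ⊆ E) :
    (mrk N F : ℤ) ≤ valX X F := by
  apply le_csInf (valX_set_nonempty X F)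
  rintro v ⟨S, hS, rfl⟩
  exact mrk_le_valSeq hE hN hF hS

lemma valX_le_valSeq {N : Matroid α} {E : Set α} (hE : E.Finite) {X : Set (Set α)}
    (hN : IsXMatroid E X N) {F : Set α} (hF : F ⊆ E) {S : List (Set α)}
    (hS : ProperSeq X S) :
    valX X F ≤ valSeq F S := by
  have hbdd : BddBelow {v : ℤ | ∃ S : List (Set α), ProperSeq X S ∧ v = valSeq F S} :=
    ⟨(mrk N F : ℤ), by rintro v ⟨T, hT, rfl⟩; exact mrk_le_valSeq hE hN hF hT⟩
  exact csInf_le hbdd ⟨S, hS, rfl⟩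

theorem valX_submodular_unique_maximal (E : Set α) (hE : E.Finite) (X : Set (Set α))
    (hXE : ∀ Y ∈ X, Y ⊆ E)
    (hsub : ∀ A ⊆ E, ∀ B ⊆ E,
      valX X (A ∪ B) + valX X (A ∩ B) ≤ valX X A + valX X B)
    (MX : Matroid α) (hMXE : MX.E = E) (hMXr : ∀ F ⊆ E, (mrk MX F : ℤ) = valX X F)
    (hexists : ∃ N : Matroid α, IsXMatroid E X N) :
    IsXMatroid E X MX ∧ ∀ M : Matroid α, IsXMatroid E X M → WeakLE M MX := by
  obtain ⟨N, hN⟩ := hexists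
  constructor
  · refine ⟨hMXE, fun C hCX => ?_⟩
    have hCE : C ⊆ E := hXE C hCX
    have hCfin := hE.subset hCE
    have hCN : N.IsCircuit' C := hN.2 C hCX
    obtain ⟨e₀, he₀⟩ := circuit_nonempty hCN
    have hpos : 0 < C.ncard := (Set.ncard_pos hCfin).2 ⟨e₀, he₀⟩
    have hone : ProperSeq X [C] := by
      refine ⟨by simpa, fun i hi => ?_⟩
      have := i.isLt
      simp only [List.length_singleton] at this
      omega
    have hval1 : valSeq C [C] = (C.ncard : ℤ) - 1 := by
      simp [valSeq, unionList_singleton, union_self]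
    have hvC : valX X C ≤ (C.ncard : ℤ) - 1 := by
      have := valX_le_valSeq hE hN hCE hone
      rwa [hval1] at this
    refine ⟨hMXE ▸ hCE, ?_, ?_⟩
    · intro hI
      have h1 : mrk MX C = C.ncard := mrk_indep hI hCfin
      have h2 := hMXr C hCE
      rw [h1] at h2
      omega
    · intro e he
      have hde : C \ {e} ⊆ E := diff_subset.trans hCE
      have hdfin := hE.subset hde
      have hlb : (mrk N (C \ {e}) : ℤ) ≤ valX X (C \ {e}) := mrk_le_valX hE hN hde
      have hNind : N.Indep (C \ {e}) := hCN.2.2 e he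
      have hNr : mrk N (C \ {e}) = (C \ {e}).ncard := mrk_indep hNind hdfin
      have hub : valX X (C \ {e}) ≤ ((C \ {e}).ncard : ℤ) := by
        have := valX_le_valSeq hE hN hde (properSeq_nil (X := X))
        simpa [valSeq] using this
      have heq := hMXr (C \ {e}) hde
      apply indep_of_mrk hdfin
      rw [hNr] at hlb
      omega
  · intro M hM I hI
    have hIE : I ⊆ E := hM.1 ▸ hI.subset_ground
    have hIfin := hE.subset hIE
    have h1 : mrk M I = I.ncard := mrk_indep hI hIfin
    have h2 : (mrk M I : ℤ) ≤ valX X I := mrk_le_valX hE hM hIE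
    have h3 := hMXr I hIE
    obtain ⟨J, hJI, hJ, hJc⟩ := exists_mrk (M := MX) hIfin
    have hle : I.ncard ≤ J.ncard := by omega
    have : J = I := Set.eq_of_subset_of_ncard_le hJI hle hIfin
    exact this ▸ hJ
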